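/- Let H be a Hilbert space, C ⊆ H nonempty, S a semigroup, and {T_s : s ∈ S} a representation of S on C. Suppose μ is a left invariant mean on a left-translation-invariant closed subspace X of ℓ∞(S) containing constants, c ∈ C has bounded orbit {T_s c : s ∈ S}, the function s ↦ ⟨T_s c, y⟩ belongs to X for every y ∈ H, and a ∈ H satisfies ⟨a, y⟩ = μ(s ↦ ⟨T_s c, y⟩) for all y ∈ H. If each T_s is nonexpansive, then a is an attractive point: ‖a − T_t x‖ ≤ ‖a − x‖ for all t ∈ S and x ∈ C. -/

import Mathlib

theorem stmt15 {H : Type*} [NormedAddCommGroup H] [InnerProductSpace ℝ H] [CompleteSpace H]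
    (C : Set H) (hCne : C.Nonempty)
    (S : Type*) [Semigroup S] (T : S → H → H)
    (hmaps : ∀ s, ∀ x ∈ C, T s x ∈ C)
    (hrep : ∀ s t, ∀ x ∈ C, T (s * t) x = T s (T t x))
    (hnonexp : ∀ s, ∀ x ∈ C, ∀ y ∈ C, ‖T s x - T s y‖ ≤ ‖x - y‖)
    -- X : a left-translation-invariant closed subspace of ℓ∞(S) containing constants
    (X : Submodule ℝ (S → ℝ))
    (hXbdd : ∀ f ∈ X, ∃ M : ℝ, ∀ s, |f s| ≤ M)
    (hXconst : ∀ r : ℝ, (fun _ : S => r) ∈ X)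
    (hXinv : ∀ f ∈ X, ∀ t : S, (fun s => f (t * s)) ∈ X)
    (hXclosed : ∀ f : S → ℝ, (∀ ε > 0, ∃ g ∈ X, ∀ s, |f s - g s| ≤ ε) → f ∈ X)
    -- μ : a left invariant mean on X
    (μ : (S → ℝ) → ℝ)
    (hadd : ∀ f ∈ X, ∀ g ∈ X, μ (f + g) = μ f + μ g)
    (hsmul : ∀ (r : ℝ), ∀ f ∈ X, μ (r • f) = r * μ f)
    (hone : μ (fun _ : S => (1 : ℝ)) = 1)
    (hnorm : ∀ f ∈ X, ∀ M : ℝ, (∀ s, |f s| ≤ M) → |μ f| ≤ M)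
    (hinv : ∀ f ∈ X, ∀ t : S, μ (fun s => f (t * s)) = μ f)
    -- c : a point of C with bounded orbit whose matrix coefficients lie in X
    (c : H) (hc : c ∈ C) (hbdd : ∃ M, ∀ s, ‖T s c‖ ≤ M)
    (hmem : ∀ y : H, (fun s => (inner ℝ (T s c) y : ℝ)) ∈ X)
    -- a : the barycenter T_μ c
    (a : H) (ha : ∀ y : H, (inner ℝ a y : ℝ) = μ (fun s => (inner ℝ (T s c) y : ℝ))) :
    ∀ t : S, ∀ x ∈ C, ‖a - T t x‖ ≤ ‖a - x‖ := by 
  obtain ⟨M, hM⟩ := hbdd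
  -- μ of a constant is the constant
  have hconstμ : ∀ r : ℝ, μ (fun _ : S => r) = r := by
    intro r
    have h1 : (r • (fun _ : S => (1:ℝ))) = (fun _ : S => r) := by
      funext s; simp
    have := hsmul r _ (hXconst 1)
    rw [h1, hone] at this
    simpa using this
  -- μ is monotone above: if g ≤ A then μ g ≤ A
  have hle : ∀ g ∈ X, ∀ A : ℝ, (∀ s, g s ≤ A) → μ g ≤ A := by
    intro g hg A hA
    obtain ⟨B, hB⟩ := hXbdd g hg
    set h : S → ℝ := (fun _ : S => A) - g with hh
    have hhX : h ∈ X := Submodule.sub_mem X (hXconst A) hg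
    have hsum : μ (h + g) = μ h + μ g := hadd h hhX g hg
    have hhg : h + g = fun _ : S => A := by funext s; simp [hh]
    rw [hhg, hconstμ] at hsum
    -- show μ h ≥ 0 : 0 ≤ h ≤ A + B
    have hnn : ∀ s, 0 ≤ h s := by intro s; simp [hh]; exact hA s
    have hub : ∀ s, |h s - (A + B)/2| ≤ (A + B)/2 := by
      intro s
      have h1 := hA s
      have h2 := (abs_le.mp (hB s)).1
      have h3 : h s ≤ A + B := by simp [hh]; nlinarith
      rw [abs_le]; constructor <;> [nlinarith [hnn s]; nlinarith]
    have hmemh : (h - fun _ : S => (A+B)/2) ∈ X :=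
      Submodule.sub_mem X hhX (hXconst _)
    have := hnorm _ hmemh ((A+B)/2) (by intro s; simpa using hub s)
    have hsplit : μ ((h - fun _ : S => (A+B)/2) + (fun _ : S => (A+B)/2))
        = μ (h - fun _ : S => (A+B)/2) + μ (fun _ : S => (A+B)/2) :=
      hadd _ hmemh _ (hXconst _)
    have heq : (h - fun _ : S => (A+B)/2) + (fun _ : S => (A+B)/2) = h := by
      funext s; simp
    rw [heq, hconstμ] at hsplit
    have habs := abs_le.mp this
    linarith [habs.1]
  -- μ is additive on differences
  have hsub : ∀ f₁ ∈ X, ∀ f₂ ∈ X, μ (f₁ - f₂) = μ f₁ - μ f₂ := by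
    intro f₁ h₁ f₂ h₂
    have h12 : (f₁ - f₂) ∈ X := Submodule.sub_mem X h₁ h₂
    have := hadd _ h12 _ h₂
    have heq : (f₁ - f₂) + f₂ = f₁ := by funext s; simp
    rw [heq] at this
    linarith
  intro t x hx
  -- the key function
  set K : ℝ := ‖x‖^2 - ‖T t x‖^2 with hK
  set q : S → ℝ := fun s => ‖T s c‖^2 with hq
  set f : S → ℝ := fun s =>
    2 * (inner ℝ (T s c) x : ℝ) - 2 * (inner ℝ (T (t*s) c) (T t x) : ℝ) with hf
  have hg1 : (fun s => (inner ℝ (T s c) x : ℝ)) ∈ X := hmem x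
  have hg2 : (fun s => (inner ℝ (T s c) (T t x) : ℝ)) ∈ X := hmem (T t x)
  have hg2t : (fun s => (inner ℝ (T (t*s) c) (T t x) : ℝ)) ∈ X := hXinv _ hg2 t
  have hfX : f ∈ X := by
    have : f = ((2:ℝ) • fun s => (inner ℝ (T s c) x : ℝ))
        - ((2:ℝ) • fun s => (inner ℝ (T (t*s) c) (T t x) : ℝ)) := by
      funext s; simp only [hf, Pi.sub_apply, Pi.smul_apply, smul_eq_mul]
    rw [this]
    exact Submodule.sub_mem X (Submodule.smul_mem X _ hg1) (Submodule.smul_mem X _ hg2t)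
  -- value of μ f
  have hμf : μ f = 2 * (inner ℝ a x : ℝ) - 2 * (inner ℝ a (T t x) : ℝ) := by
    have h1 : μ ((2:ℝ) • fun s => (inner ℝ (T s c) x : ℝ))
        = 2 * (inner ℝ a x : ℝ) := by
      rw [hsmul 2 _ hg1, ← ha x]
    have h2 : μ ((2:ℝ) • fun s => (inner ℝ (T (t*s) c) (T t x) : ℝ))
        = 2 * (inner ℝ a (T t x) : ℝ) := by
      rw [hsmul 2 _ hg2t, hinv _ hg2 t, ← ha (T t x)]
    have : f = ((2:ℝ) • fun s => (inner ℝ (T s c) x : ℝ))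
        - ((2:ℝ) • fun s => (inner ℝ (T (t*s) c) (T t x) : ℝ)) := by
      funext s; simp only [hf, Pi.sub_apply, Pi.smul_apply, smul_eq_mul]
    rw [this, hsub _ (Submodule.smul_mem X _ hg1) _ (Submodule.smul_mem X _ hg2t), h1, h2]
  -- pointwise key bound
  have key : ∀ σ : S, f σ ≤ K + q σ - q (t * σ) := by
    intro σ
    have h1 : ‖T (t*σ) c - T t x‖ ≤ ‖T σ c - x‖ := by
      rw [hrep t σ c hc]
      exact hnonexp t (T σ c) (hmaps σ c hc) x hx
    have h2 : ‖T (t*σ) c - T t x‖^2 ≤ ‖T σ c - x‖^2 :=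
      pow_le_pow_left₀ (norm_nonneg _) h1 2
    have e1 : ‖T (t*σ) c - T t x‖^2
        = ‖T (t*σ) c‖^2 - 2 * (inner ℝ (T (t*σ) c) (T t x) : ℝ) + ‖T t x‖^2 :=
      norm_sub_sq_real _ _
    have e2 : ‖T σ c - x‖^2
        = ‖T σ c‖^2 - 2 * (inner ℝ (T σ c) x : ℝ) + ‖x‖^2 :=
      norm_sub_sq_real _ _
    rw [e1, e2] at h2
    simp only [hf, hK, hq]
    linarith
  -- iterates
  set w : ℕ → S → S := fun n => (fun s => t * s)^[n] with hw
  set g : ℕ → S → ℝ := fun k s => f (w k s) with hg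
  set r : ℕ → S → ℝ := fun k s => q (w k s) with hr
  have hgsucc : ∀ k, g (k+1) = fun s => g k (t * s) := by
    intro k; funext s
    simp only [hg, hw, Function.iterate_succ_apply]
  have hg0 : g 0 = f := by funext s; simp [hg, hw]
  have hgX : ∀ k, g k ∈ X := by
    intro k; induction k with
    | zero => rw [hg0]; exact hfX
    | succ k ih => rw [hgsucc k]; exact hXinv _ ih t
  have hgμ : ∀ k, μ (g k) = μ f := by
    intro k; induction k with
    | zero => rw [hg0]
    | succ k ih => rw [hgsucc k, hinv _ (hgX k) t, ih]
  have hgbd : ∀ k s, g k s ≤ K + r k s - r (k+1) s := by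
    intro k s
    have := key (w k s)
    have hrs : r (k+1) s = q (t * w k s) := by
      simp only [hr, hw, Function.iterate_succ_apply']
    rw [hrs]
    exact this
  -- partial sums
  set F : ℕ → S → ℝ := fun n s => ∑ k ∈ Finset.range n, g k s with hF
  have hFsucc : ∀ n, F (n+1) = F n + g n := by
    intro n; funext s
    exact Finset.sum_range_succ (fun k => g k s) n
  have hFX : ∀ n, F n ∈ X := by
    intro n; induction n with
    | zero =>
      have : F 0 = fun _ : S => (0:ℝ) := by funext s; simp [hF]
      rw [this]; exact hXconst 0
    | succ n ih => rw [hFsucc n]; exact Submodule.add_mem X ih (hgX n)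
  have hFμ : ∀ n, μ (F n) = n * μ f := by
    intro n; induction n with
    | zero =>
      have : F 0 = fun _ : S => (0:ℝ) := by funext s; simp [hF]
      rw [this, hconstμ]; simp
    | succ n ih =>
      rw [hFsucc n, hadd _ (hFX n) _ (hgX n), ih, hgμ n]
      push_cast; ring
  have hFbd : ∀ n s, F n s ≤ n * K + r 0 s - r n s := by
    intro n s; induction n with
    | zero => simp [hF]
    | succ n ih =>
      have h1 := hgbd n s
      have h2 : F (n+1) s = F n s + g n s := Finset.sum_range_succ (fun k => g k s) n
      rw [h2]; push_cast; linarith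
  have hFbd' : ∀ n, ∀ s, F n s ≤ n * K + M^2 := by
    intro n s
    have h1 := hFbd n s
    have h2 : r 0 s ≤ M^2 := by
      simp only [hr, hw, hq, Function.iterate_zero_apply]
      have := hM s
      nlinarith [norm_nonneg (T s c)]
    have h3 : 0 ≤ r n s := by simp only [hr, hq]; positivity
    linarith
  have hnK : ∀ n : ℕ, (n:ℝ) * μ f ≤ n * K + M^2 := by
    intro n
    have := hle _ (hFX n) _ (hFbd' n)
    rw [hFμ n] at this
    exact this
  -- conclude μ f ≤ K
  have hμfK : μ f ≤ K := by
    by_contra hcon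
    push_neg at hcon
    have hd : 0 < μ f - K := by linarith
    obtain ⟨n, hn⟩ := exists_nat_gt (M^2 / (μ f - K))
    have h1 := hnK n
    rw [div_lt_iff₀ hd] at hn
    nlinarith
  -- final computation
  have e1 : ‖a - T t x‖^2 = ‖a‖^2 - 2 * (inner ℝ a (T t x) : ℝ) + ‖T t x‖^2 :=
    norm_sub_sq_real _ _
  have e2 : ‖a - x‖^2 = ‖a‖^2 - 2 * (inner ℝ a x : ℝ) + ‖x‖^2 :=
    norm_sub_sq_real _ _
  have hsq : ‖a - T t x‖^2 ≤ ‖a - x‖^2 := by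
    rw [e1, e2]
    rw [hμf] at hμfK
    simp only [hK] at hμfK
    linarith
  have := (pow_le_pow_iff_left₀ (norm_nonneg (a - T t x)) (norm_nonneg (a - x)) (by norm_num)).mp hsq
  exact this
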